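/- Consider the Suslov system on ℝ⁵ with parameters I₁, I₂ > 0, I₁₃, I₂₃ ∈ ℝ with a₃/I₂₃ > 0, and linear potential U(γ) = a₁γ₁ + a₂γ₂ + a₃γ₃. Then the point x₀ = (ω₁, ω₂, γ₁, γ₂, γ₃) = (0, −√(a₃/I₂₃), 0, 1, 0) is an equilibrium of the defining vector field v (v(x₀) = 0), and the divergence of v at x₀ (equal to the trace of the linearization matrix there) is div v(x₀) = (I₁₃/I₁)·√(a₃/I₂₃). -/
import Mathlib


/-- The Suslov system on ℝ⁵, coordinates `x = (ω₁, ω₂, γ₁, γ₂, γ₃)`, with parameters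
`I₁, I₂ > 0`, `I₁₃, I₂₃ ∈ ℝ` and the linear potential `U = a₁γ₁ + a₂γ₂ + a₃γ₃`:
`I₁ω̇₁ = −ω₂(I₁₃ω₁+I₂₃ω₂) + γ₂a₃ − γ₃a₂`, `I₂ω̇₂ = ω₁(I₁₃ω₁+I₂₃ω₂) + γ₃a₁ − γ₁a₃`,
`γ̇₁ = −γ₃ω₂`, `γ̇₂ = γ₃ω₁`, `γ̇₃ = γ₁ω₂ − γ₂ω₁`. -/
noncomputable def suslovLin (I₁ I₂ I₁₃ I₂₃ a₁ a₂ a₃ : ℝ) (x : Fin 5 → ℝ) : Fin 5 → ℝ :=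
  ![(-(x 1) * (I₁₃ * x 0 + I₂₃ * x 1) + x 3 * a₃ - x 4 * a₂) / I₁,
    ((x 0) * (I₁₃ * x 0 + I₂₃ * x 1) + x 4 * a₁ - x 2 * a₃) / I₂,
    -(x 4) * x 1,
    (x 4) * x 0,
    x 2 * x 1 - x 3 * x 0]

/-- For the Suslov system with linear potential and `a₃/I₂₃ > 0`, the point
`x₀ = (0, −√(a₃/I₂₃), 0, 1, 0)` is an equilibrium, and the divergence of the field at `x₀`
(the trace of the linearization matrix there) equals `(I₁₃/I₁)·√(a₃/I₂₃)`. -/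
theorem suslov_equilibrium_nonzero_divergence
    (I₁ I₂ I₁₃ I₂₃ a₁ a₂ a₃ : ℝ) (hI₁ : 0 < I₁) (hI₂ : 0 < I₂) (ha : 0 < a₃ / I₂₃) :
    suslovLin I₁ I₂ I₁₃ I₂₃ a₁ a₂ a₃ ![0, -Real.sqrt (a₃ / I₂₃), 0, 1, 0] = 0 ∧
    ∑ i, fderiv ℝ (fun y => suslovLin I₁ I₂ I₁₃ I₂₃ a₁ a₂ a₃ y i)
        ![0, -Real.sqrt (a₃ / I₂₃), 0, 1, 0] (Pi.single i 1)
      = (I₁₃ / I₁) * Real.sqrt (a₃ / I₂₃) := by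
  have hI : I₂₃ ≠ 0 := by
    rintro rfl; simp at ha
  have hs : Real.sqrt (a₃ / I₂₃) * Real.sqrt (a₃ / I₂₃) = a₃ / I₂₃ :=
    Real.mul_self_sqrt ha.le
  set s := Real.sqrt (a₃ / I₂₃) with hsdef
  set x₀ : Fin 5 → ℝ := ![0, -s, 0, 1, 0] with hx₀
  have e0 : x₀ 0 = 0 := rfl
  have e1 : x₀ 1 = -s := rfl
  have e2 : x₀ 2 = 0 := rfl
  have e3 : x₀ 3 = 1 := rfl
  have e4 : x₀ 4 = 0 := rfl
  have h0 := hasFDerivAt_apply (𝕜 := ℝ) (F' := fun _ : Fin 5 => ℝ) 0 x₀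
  have h1 := hasFDerivAt_apply (𝕜 := ℝ) (F' := fun _ : Fin 5 => ℝ) 1 x₀
  have h2 := hasFDerivAt_apply (𝕜 := ℝ) (F' := fun _ : Fin 5 => ℝ) 2 x₀
  have h3 := hasFDerivAt_apply (𝕜 := ℝ) (F' := fun _ : Fin 5 => ℝ) 3 x₀
  have h4 := hasFDerivAt_apply (𝕜 := ℝ) (F' := fun _ : Fin 5 => ℝ) 4 x₀
  have hkey : I₂₃ * Real.sqrt (a₃ * I₂₃⁻¹) ^ 2 = a₃ := by
    rw [← div_eq_mul_inv, Real.sq_sqrt ha.le]; field_simp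
  constructor
  · funext i
    fin_cases i
    · simp [suslovLin, hx₀]
      left
      have h5 : s * (I₂₃ * s) = a₃ := by
        rw [mul_comm I₂₃ s, ← mul_assoc, hs]; field_simp
      linarith [h5]
    · simp [suslovLin, hx₀]
    · simp [suslovLin, hx₀]
    · simp [suslovLin, hx₀]
    · simp [suslovLin, hx₀]
  · have F0 : HasFDerivAt
        (fun y : Fin 5 → ℝ =>
          (-(y 1) * (I₁₃ * y 0 + I₂₃ * y 1) + y 3 * a₃ - y 4 * a₂) * I₁⁻¹) _ x₀ :=
      (((h1.neg.mul ((h0.const_mul I₁₃).add (h1.const_mul I₂₃))).add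
        (h3.mul_const a₃)).sub (h4.mul_const a₂)).mul_const I₁⁻¹
    have F1 : HasFDerivAt
        (fun y : Fin 5 → ℝ =>
          ((y 0) * (I₁₃ * y 0 + I₂₃ * y 1) + y 4 * a₁ - y 2 * a₃) * I₂⁻¹) _ x₀ :=
      (((h0.mul ((h0.const_mul I₁₃).add (h1.const_mul I₂₃))).add
        (h4.mul_const a₁)).sub (h2.mul_const a₃)).mul_const I₂⁻¹
    have F2 : HasFDerivAt (fun y : Fin 5 → ℝ => -(y 4) * y 1) _ x₀ := h4.neg.mul h1
    have F3 : HasFDerivAt (fun y : Fin 5 → ℝ => (y 4) * y 0) _ x₀ := h4.mul h0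
    have F4 : HasFDerivAt (fun y : Fin 5 → ℝ => y 2 * y 1 - y 3 * y 0) _ x₀ :=
      (h2.mul h1).sub (h3.mul h0)
    rw [Fin.sum_univ_five]
    have g0 : (fun y : Fin 5 → ℝ => suslovLin I₁ I₂ I₁₃ I₂₃ a₁ a₂ a₃ y 0) =
        fun y => (-(y 1) * (I₁₃ * y 0 + I₂₃ * y 1) + y 3 * a₃ - y 4 * a₂) * I₁⁻¹ := by
      funext y; exact div_eq_mul_inv _ _
    have g1 : (fun y : Fin 5 → ℝ => suslovLin I₁ I₂ I₁₃ I₂₃ a₁ a₂ a₃ y 1) =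
        fun y => ((y 0) * (I₁₃ * y 0 + I₂₃ * y 1) + y 4 * a₁ - y 2 * a₃) * I₂⁻¹ := by
      funext y; exact div_eq_mul_inv _ _
    have g2 : (fun y : Fin 5 → ℝ => suslovLin I₁ I₂ I₁₃ I₂₃ a₁ a₂ a₃ y 2) =
        fun y => -(y 4) * y 1 := rfl
    have g3 : (fun y : Fin 5 → ℝ => suslovLin I₁ I₂ I₁₃ I₂₃ a₁ a₂ a₃ y 3) =
        fun y => (y 4) * y 0 := rfl
    have g4 : (fun y : Fin 5 → ℝ => suslovLin I₁ I₂ I₁₃ I₂₃ a₁ a₂ a₃ y 4) =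
        fun y => y 2 * y 1 - y 3 * y 0 := rfl
    rw [g0, g1, g2, g3, g4, F0.fderiv, F1.fderiv, F2.fderiv, F3.fderiv, F4.fderiv]
    simp [e0, e1, e2, e3, e4, Pi.single_apply]
    ring
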